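/- Let P be a probability distribution on R^d with density bounded above by M > 0 vanishing outside a bounded set C of diameter r. Then for all x ∈ C and unit vectors u, v, |P(⟨u, X⟩ ≤ ⟨u, x⟩) − P(⟨v, X⟩ ≤ ⟨v, x⟩)| ≤ L·arccos(⟨u, v⟩), with L = M π^{d/2−1} r^d / Γ(d/2 + 1). -/

import Mathlib

open Real MeasureTheory Set
open scoped RealInnerProductSpace ENNReal

lemma arc_meas {θ : ℝ} (hθ0 : 0 ≤ θ) (hθπ : θ ≤ π) (c : ℝ) :
    volume ({t | Real.cos t ≤ 0 ∧ 0 < Real.cos (t - θ)} ∩ Ioc c (c + 2*π)) ≤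
      ENNReal.ofReal θ := by
  have hA : MeasurableSet {t | Real.cos t ≤ 0 ∧ 0 < Real.cos (t - θ)} := by
    apply MeasurableSet.inter
    · exact measurableSet_le (Real.measurable_cos) measurable_const
    · exact measurableSet_lt measurable_const (Real.measurable_cos.comp (measurable_id.sub measurable_const))
  have h2π : (0:ℝ) < 2*π := by positivity
  have hfd1 := isAddFundamentalDomain_Ioc h2π c (μ := volume)
  have hfd2 := isAddFundamentalDomain_Ioc h2π (-(π/2)) (μ := volume)
  have hinv : ∀ g : AddSubgroup.zmultiples (2*π),
      (fun x => g +ᵥ x) ⁻¹' {t | Real.cos t ≤ 0 ∧ 0 < Real.cos (t - θ)} =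
        {t | Real.cos t ≤ 0 ∧ 0 < Real.cos (t - θ)} := by
    rintro ⟨g, hg⟩
    obtain ⟨k, rfl⟩ := (AddSubgroup.mem_zmultiples_iff).mp hg
    ext t
    simp only [Set.mem_preimage, Set.mem_setOf_eq, AddSubgroup.vadd_def, vadd_eq_add]
    have h1 : ∀ s : ℝ, Real.cos (k • (2*π) + s) = Real.cos s := by
      intro s
      rw [add_comm, zsmul_eq_mul]
      exact Real.cos_add_int_mul_two_pi s k
    rw [h1, show k • (2*π) + t - θ = k • (2*π) + (t - θ) by ring, h1]
  have := hfd1.measure_set_eq hfd2 hA hinv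
  rw [this]
  have hsub : {t | Real.cos t ≤ 0 ∧ 0 < Real.cos (t - θ)} ∩ Ioc (-(π/2)) (-(π/2) + 2*π) ⊆
      Ico (π/2) (π/2 + θ) := by
    rintro t ⟨⟨h1, h2⟩, h3, h4⟩
    constructor
    · by_contra h
      push_neg at h
      have : 0 < Real.cos t := Real.cos_pos_of_mem_Ioo ⟨h3, h⟩
      linarith
    · by_contra h
      push_neg at h
      have hub : t - θ ≤ π + π/2 := by linarith
      have hlb : π/2 ≤ t - θ := by linarith
      have : Real.cos (t - θ) ≤ 0 := Real.cos_nonpos_of_pi_div_two_le_of_le hlb hub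
      linarith
  calc volume _ ≤ volume (Ico (π/2) (π/2 + θ)) := measure_mono hsub
    _ = ENNReal.ofReal θ := by rw [Real.volume_Ico]; ring_nf

lemma inner_arc_bound {θ : ℝ} (hθ0 : 0 ≤ θ) (hθπ : θ ≤ π) (a b : ℝ) :
    volume ({t : ℝ | Real.cos t * a - Real.sin t * b ≤ 0 ∧
        0 < Real.cos (t - θ) * a - Real.sin (t - θ) * b} ∩ Ioc 0 (2*π)) ≤
      ENNReal.ofReal θ := by
  by_cases hab : a = 0 ∧ b = 0
  · obtain ⟨rfl, rfl⟩ := hab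
    simp
  · have hz : (Complex.I * b + a : ℂ) ≠ 0 := by
      intro h
      apply hab
      have hre := congrArg Complex.re h
      have him := congrArg Complex.im h
      simp at hre him
      exact ⟨hre, him⟩
    set ψ := Complex.arg (Complex.I * b + a) with hψ
    set ρ := ‖(Complex.I * b + a : ℂ)‖ with hρ
    have hρ0 : 0 < ρ := norm_pos_iff.mpr hz
    have hre : (Complex.I * b + a : ℂ).re = a := by simp
    have him : (Complex.I * b + a : ℂ).im = b := by simp
    have ha : a = ρ * Real.cos ψ := by
      have h := Complex.cos_arg hz
      rw [← hψ, hre, ← hρ] at h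
      field_simp at h
      linarith
    have hb : b = ρ * Real.sin ψ := by
      have h := Complex.sin_arg (Complex.I * b + a : ℂ)
      rw [← hψ, him, ← hρ] at h
      field_simp at h
      linarith
    have hform : ∀ s : ℝ, Real.cos s * a - Real.sin s * b = ρ * Real.cos (s + ψ) := by
      intro s
      rw [ha, hb, Real.cos_add]
      ring
    have hmul1 : ∀ x : ℝ, ρ * x ≤ 0 ↔ x ≤ 0 := by
      intro x
      constructor <;> intro h <;> nlinarith
    have hmul2 : ∀ x : ℝ, 0 < ρ * x ↔ 0 < x := by
      intro x
      constructor <;> intro h <;> nlinarith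
    have hsetid : {t : ℝ | Real.cos t * a - Real.sin t * b ≤ 0 ∧
          0 < Real.cos (t - θ) * a - Real.sin (t - θ) * b} ∩ Ioc 0 (2*π) =
        (fun t : ℝ => t + ψ) ⁻¹'
          ({s : ℝ | Real.cos s ≤ 0 ∧ 0 < Real.cos (s - θ)} ∩ Ioc ψ (ψ + 2*π)) := by
      ext t
      simp only [Set.mem_inter_iff, Set.mem_setOf_eq, Set.mem_preimage, Set.mem_Ioc]
      rw [hform t, hform (t - θ), show t - θ + ψ = t + ψ - θ by ring, hmul1, hmul2]
      constructor
      · rintro ⟨⟨p, q⟩, r, s⟩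
        exact ⟨⟨p, q⟩, by linarith, by linarith⟩
      · rintro ⟨⟨p, q⟩, r, s⟩
        exact ⟨⟨p, q⟩, by linarith, by linarith⟩
    rw [hsetid, measure_preimage_add_right]
    exact arc_meas hθ0 hθπ ψ

variable {F : Type*} [NormedAddCommGroup F] [InnerProductSpace ℝ F]

noncomputable def rotL (u w : F) (φ : ℝ) : F →ₗ[ℝ] F :=
  LinearMap.id
    + (((Real.cos φ - 1) • innerₗ F u - Real.sin φ • innerₗ F w).smulRight u)
    + ((Real.sin φ • innerₗ F u + (Real.cos φ - 1) • innerₗ F w).smulRight w)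

lemma rotL_apply (u w : F) (φ : ℝ) (z : F) :
    rotL u w φ z = z + ((Real.cos φ - 1) * ⟪u, z⟫ - Real.sin φ * ⟪w, z⟫) • u
      + (Real.sin φ * ⟪u, z⟫ + (Real.cos φ - 1) * ⟪w, z⟫) • w := by
  simp [rotL, LinearMap.smulRight_apply, smul_eq_mul]

lemma rotL_norm {u w : F} (hu : ‖u‖ = 1) (hw : ‖w‖ = 1) (huw : ⟪u, w⟫ = 0)
    (φ : ℝ) (z : F) : ‖rotL u w φ z‖ = ‖z‖ := by
  have h1 : ⟪u, u⟫ = 1 := by rw [real_inner_self_eq_norm_sq, hu]; norm_num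
  have h2 : ⟪w, w⟫ = 1 := by rw [real_inner_self_eq_norm_sq, hw]; norm_num
  have huw' : ⟪w, u⟫ = 0 := by rw [real_inner_comm]; exact huw
  have h3 : Real.sin φ ^ 2 + Real.cos φ ^ 2 = 1 := Real.sin_sq_add_cos_sq φ
  have key : ⟪rotL u w φ z, rotL u w φ z⟫ = ⟪z, z⟫ := by
    rw [rotL_apply]
    simp only [inner_add_add_self, real_inner_smul_left, real_inner_smul_right,
      inner_add_left, inner_add_right, huw, huw', h1, h2,
      real_inner_comm u z, real_inner_comm w z]
    linear_combination ((⟪u,z⟫:ℝ)^2 + (⟪w,z⟫:ℝ)^2) * h3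
  rw [norm_eq_sqrt_real_inner, key, ← norm_eq_sqrt_real_inner]

variable [FiniteDimensional ℝ F]

noncomputable def rotE {u w : F} (hu : ‖u‖ = 1) (hw : ‖w‖ = 1) (huw : ⟪u, w⟫ = 0)
    (φ : ℝ) : F ≃ₗᵢ[ℝ] F :=
  LinearIsometry.toLinearIsometryEquiv ⟨rotL u w φ, rotL_norm hu hw huw φ⟩ rfl

lemma rotE_apply {u w : F} (hu : ‖u‖ = 1) (hw : ‖w‖ = 1) (huw : ⟪u, w⟫ = 0)
    (φ : ℝ) (z : F) : rotE hu hw huw φ z = rotL u w φ z := rfl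

lemma inner_u_rotE {u w : F} (hu : ‖u‖ = 1) (hw : ‖w‖ = 1) (huw : ⟪u, w⟫ = 0)
    (φ : ℝ) (z : F) :
    ⟪u, rotE hu hw huw φ z⟫ = Real.cos φ * ⟪u, z⟫ - Real.sin φ * ⟪w, z⟫ := by
  have h1 : ⟪u, u⟫ = 1 := by rw [real_inner_self_eq_norm_sq, hu]; norm_num
  rw [rotE_apply, rotL_apply]
  simp only [inner_add_right, real_inner_smul_right, h1, huw]
  ring

lemma inner_w_rotE {u w : F} (hu : ‖u‖ = 1) (hw : ‖w‖ = 1) (huw : ⟪u, w⟫ = 0)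
    (φ : ℝ) (z : F) :
    ⟪w, rotE hu hw huw φ z⟫ = Real.sin φ * ⟪u, z⟫ + Real.cos φ * ⟪w, z⟫ := by
  have h2 : ⟪w, w⟫ = 1 := by rw [real_inner_self_eq_norm_sq, hw]; norm_num
  have huw' : ⟪w, u⟫ = 0 := by rw [real_inner_comm]; exact huw
  rw [rotE_apply, rotL_apply]
  simp only [inner_add_right, real_inner_smul_right, h2, huw']
  ring

lemma wedge_vol {d : ℕ} (R : ℝ) {u v : EuclideanSpace ℝ (Fin d)} (hu : ‖u‖ = 1)
    (hv : ‖v‖ = 1) (hlt : ⟪u, v⟫ < 1) (hgt : -1 < ⟪u, v⟫) :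
    ENNReal.ofReal (2*π) *
        volume (Metric.closedBall (0 : EuclideanSpace ℝ (Fin d)) R ∩
          {z | ⟪u, z⟫ ≤ 0 ∧ 0 < ⟪v, z⟫}) ≤
      ENNReal.ofReal (Real.arccos ⟪u, v⟫) *
        volume (Metric.closedBall (0 : EuclideanSpace ℝ (Fin d)) R) := by
  set θ := Real.arccos ⟪u, v⟫ with hθdef
  have hθ0 : 0 < θ := Real.arccos_pos.mpr hlt
  have hθπ : θ < π := by
    have h1 := Real.neg_pi_div_two_lt_arcsin.mpr hgt
    rw [hθdef, Real.arccos]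
    linarith
  have hcosθ : Real.cos θ = ⟪u, v⟫ := Real.cos_arccos hgt.le hlt.le
  have hsθ : 0 < Real.sin θ := Real.sin_pos_of_pos_of_lt_pi hθ0 hθπ
  have huu : ⟪u, u⟫ = 1 := by rw [real_inner_self_eq_norm_sq, hu]; norm_num
  have hvv : ⟪v, v⟫ = 1 := by rw [real_inner_self_eq_norm_sq, hv]; norm_num
  set w : EuclideanSpace ℝ (Fin d) := (Real.sin θ)⁻¹ • (v - Real.cos θ • u) with hwdef
  have hvu : ⟪v, u⟫ = ⟪u, v⟫ := real_inner_comm u v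
  have hww : ⟪w, w⟫ = 1 := by
    have expand : ⟪v - Real.cos θ • u, v - Real.cos θ • u⟫ = Real.sin θ ^ 2 := by
      simp only [inner_sub_sub_self, real_inner_smul_left, real_inner_smul_right,
        huu, hvv, hvu]
      have := Real.sin_sq_add_cos_sq θ
      linear_combination -this + 2*Real.cos θ * hcosθ
    rw [hwdef, real_inner_smul_left, real_inner_smul_right, expand]
    field_simp
  have hw : ‖w‖ = 1 := by
    have h := real_inner_self_eq_norm_sq w
    nlinarith [norm_nonneg w, hww]
  have huw : ⟪u, w⟫ = 0 := by
    rw [hwdef, real_inner_smul_right, inner_sub_right, real_inner_smul_right, huu, hcosθ]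
    ring
  have hveq : v = Real.cos θ • u + Real.sin θ • w := by
    rw [hwdef, smul_smul, mul_inv_cancel₀ hsθ.ne', one_smul]
    abel
  -- inner products with rotations
  have hinnerv : ∀ (φ : ℝ) (z : EuclideanSpace ℝ (Fin d)), ⟪v, rotE hu hw huw φ z⟫ =
      Real.cos (φ - θ) * ⟪u, z⟫ - Real.sin (φ - θ) * ⟪w, z⟫ := by
    intro φ z
    conv_lhs => rw [hveq]
    rw [inner_add_left, real_inner_smul_left, real_inner_smul_left,
      inner_u_rotE, inner_w_rotE, Real.cos_sub, Real.sin_sub]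
    ring
  set B := Metric.closedBall (0 : EuclideanSpace ℝ (Fin d)) R with hBdef
  have hBmeas : MeasurableSet B := measurableSet_closedBall
  set Wdg : Set (EuclideanSpace ℝ (Fin d)) := B ∩ {z | ⟪u, z⟫ ≤ 0 ∧ 0 < ⟪v, z⟫} with hWdef
  have hacont : Continuous fun z : EuclideanSpace ℝ (Fin d) => (⟪u, z⟫ : ℝ) := Continuous.inner continuous_const continuous_id
  have hbcont : Continuous fun z : EuclideanSpace ℝ (Fin d) => (⟪w, z⟫ : ℝ) := Continuous.inner continuous_const continuous_id
  have hvcont : Continuous fun z : EuclideanSpace ℝ (Fin d) => (⟪v, z⟫ : ℝ) := Continuous.inner continuous_const continuous_id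
  have hWmeas : MeasurableSet Wdg := by
    apply hBmeas.inter
    exact (measurableSet_le hacont.measurable measurable_const).inter
      (measurableSet_lt measurable_const hvcont.measurable)
  set S : Set (ℝ × EuclideanSpace ℝ (Fin d)) := {p | p.2 ∈ B ∧
      Real.cos p.1 * ⟪u, p.2⟫ - Real.sin p.1 * ⟪w, p.2⟫ ≤ 0 ∧
      0 < Real.cos (p.1 - θ) * ⟪u, p.2⟫ - Real.sin (p.1 - θ) * ⟪w, p.2⟫} with hSdef
  have hc1 : Continuous fun p : ℝ × EuclideanSpace ℝ (Fin d) =>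
      Real.cos p.1 * ⟪u, p.2⟫ - Real.sin p.1 * ⟪w, p.2⟫ :=
    ((Real.continuous_cos.comp continuous_fst).mul (hacont.comp continuous_snd)).sub
      ((Real.continuous_sin.comp continuous_fst).mul (hbcont.comp continuous_snd))
  have hc2 : Continuous fun p : ℝ × EuclideanSpace ℝ (Fin d) =>
      Real.cos (p.1 - θ) * ⟪u, p.2⟫ - Real.sin (p.1 - θ) * ⟪w, p.2⟫ :=
    (((Real.continuous_cos.comp (continuous_fst.sub continuous_const))).mul
        (hacont.comp continuous_snd)).sub
      (((Real.continuous_sin.comp (continuous_fst.sub continuous_const))).mul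
        (hbcont.comp continuous_snd))
  have hSmeas : MeasurableSet S := by
    rw [hSdef]
    simp_rw [Set.setOf_and]
    refine MeasurableSet.inter (measurable_snd hBmeas) (MeasurableSet.inter ?_ ?_)
    · exact measurableSet_le hc1.measurable measurable_const
    · exact measurableSet_lt measurable_const hc2.measurable
  have hslice : ∀ φ : ℝ, (rotE hu hw huw φ) ⁻¹' Wdg = Prod.mk φ ⁻¹' S := by
    intro φ
    ext z
    simp only [Set.mem_preimage, hWdef, Set.mem_inter_iff, Set.mem_setOf_eq, hSdef,
      hBdef, Metric.mem_closedBall, dist_zero_right]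
    rw [(rotE hu hw huw φ).norm_map, inner_u_rotE, hinnerv]
  have hrotvol : ∀ φ : ℝ, volume ((rotE hu hw huw φ) ⁻¹' Wdg) = volume Wdg := by
    intro φ
    exact (rotE hu hw huw φ).measurePreserving.measure_preimage hWmeas.nullMeasurableSet
  -- Fubini
  have h2π : (0:ℝ) < 2*π := by positivity
  have hmeas_t : ∀ z : EuclideanSpace ℝ (Fin d), MeasurableSet {t : ℝ |
      Real.cos t * ⟪u, z⟫ - Real.sin t * ⟪w, z⟫ ≤ 0 ∧
      0 < Real.cos (t - θ) * ⟪u, z⟫ - Real.sin (t - θ) * ⟪w, z⟫} := by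
    intro z
    have m1 : Measurable fun t : ℝ => Real.cos t * ⟪u, z⟫ - Real.sin t * ⟪w, z⟫ := by fun_prop
    have m2 : Measurable fun t : ℝ =>
        Real.cos (t - θ) * ⟪u, z⟫ - Real.sin (t - θ) * ⟪w, z⟫ := by fun_prop
    exact (measurableSet_le m1 measurable_const).inter (measurableSet_lt measurable_const m2)
  calc ENNReal.ofReal (2*π) * volume Wdg
      = ∫⁻ φ in Ioc (0:ℝ) (2*π), volume Wdg := by
        rw [setLIntegral_const, Real.volume_Ioc, mul_comm]
        norm_num
    _ = ∫⁻ φ in Ioc (0:ℝ) (2*π), ∫⁻ z, S.indicator (fun _ => (1:ℝ≥0∞)) (φ, z) := by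
        apply setLIntegral_congr_fun measurableSet_Ioc
        intro φ _
        calc volume Wdg = volume ((rotE hu hw huw φ) ⁻¹' Wdg) := (hrotvol φ).symm
          _ = volume (Prod.mk φ ⁻¹' S) := by rw [hslice φ]
          _ = ∫⁻ z, (Prod.mk φ ⁻¹' S).indicator (fun _ => (1:ℝ≥0∞)) z := by
              rw [lintegral_indicator_const (measurable_prodMk_left hSmeas), one_mul]
          _ = ∫⁻ z, S.indicator (fun _ => (1:ℝ≥0∞)) (φ, z) := by
              apply lintegral_congr
              intro z
              rfl
    _ = ∫⁻ z, ∫⁻ φ in Ioc (0:ℝ) (2*π), S.indicator (fun _ => (1:ℝ≥0∞)) (φ, z) := by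
        apply lintegral_lintegral_swap
        exact (measurable_const.indicator hSmeas).aemeasurable
    _ ≤ ∫⁻ z, B.indicator (fun _ => ENNReal.ofReal θ) z := by
        apply lintegral_mono
        intro z
        by_cases hzB : z ∈ B
        · rw [Set.indicator_of_mem hzB]
          have heq : ∀ φ : ℝ, S.indicator (fun _ => (1:ℝ≥0∞)) (φ, z) =
              ({t : ℝ | Real.cos t * ⟪u, z⟫ - Real.sin t * ⟪w, z⟫ ≤ 0 ∧
                0 < Real.cos (t - θ) * ⟪u, z⟫ - Real.sin (t - θ) * ⟪w, z⟫}).indicator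
                  (fun _ => (1:ℝ≥0∞)) φ := by
            intro φ
            classical
            simp only [Set.indicator_apply, hSdef, Set.mem_setOf_eq]
            exact if_congr ⟨fun h => ⟨h.2.1, h.2.2⟩, fun h => ⟨hzB, h.1, h.2⟩⟩ rfl rfl
          simp_rw [heq]
          rw [lintegral_indicator_const (hmeas_t z), one_mul, Measure.restrict_apply (hmeas_t z)]
          exact inner_arc_bound hθ0.le hθπ.le ⟪u, z⟫ ⟪w, z⟫
        · rw [Set.indicator_of_notMem hzB]
          have heq : ∀ φ : ℝ, S.indicator (fun _ => (1:ℝ≥0∞)) (φ, z) = 0 := by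
            intro φ
            apply Set.indicator_of_notMem
            rw [hSdef]
            intro hc
            exact hzB hc.1
          simp_rw [heq]
          simp
    _ = ENNReal.ofReal θ * volume B := by
        rw [lintegral_indicator_const hBmeas]

lemma mu_diff_bound {d : ℕ} {M r : ℝ} (hM : 0 ≤ M) (f : EuclideanSpace ℝ (Fin d) → ℝ)
    (hf_le : ∀ y, f y ≤ M) (x : EuclideanSpace ℝ (Fin d))
    (hf0 : ∀ y ∉ Metric.closedBall x r, f y = 0) (p q : EuclideanSpace ℝ (Fin d)) :
    (volume.withDensity fun y => ENNReal.ofReal (f y))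
        ({y | ⟪p, y⟫ ≤ ⟪p, x⟫} \ {y | ⟪q, y⟫ ≤ ⟪q, x⟫}) ≤
      ENNReal.ofReal M *
        volume (Metric.closedBall (0 : EuclideanSpace ℝ (Fin d)) r ∩
          {z | ⟪p, z⟫ ≤ 0 ∧ 0 < ⟪q, z⟫}) := by
  have hpc : Continuous fun y : EuclideanSpace ℝ (Fin d) => (⟪p, y⟫ : ℝ) :=
    Continuous.inner continuous_const continuous_id
  have hqc : Continuous fun y : EuclideanSpace ℝ (Fin d) => (⟪q, y⟫ : ℝ) :=
    Continuous.inner continuous_const continuous_id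
  have hs : MeasurableSet ({y : EuclideanSpace ℝ (Fin d) | ⟪p, y⟫ ≤ ⟪p, x⟫} \
      {y | ⟪q, y⟫ ≤ ⟪q, x⟫}) :=
    (measurableSet_le hpc.measurable measurable_const).diff
      (measurableSet_le hqc.measurable measurable_const)
  have hK : MeasurableSet (Metric.closedBall x r) := measurableSet_closedBall
  rw [withDensity_apply _ hs]
  have hb : ∀ y, ENNReal.ofReal (f y) ≤
      (Metric.closedBall x r).indicator (fun _ => ENNReal.ofReal M) y := by
    intro y
    by_cases hy : y ∈ Metric.closedBall x r
    · rw [Set.indicator_of_mem hy]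
      exact ENNReal.ofReal_le_ofReal (hf_le y)
    · rw [Set.indicator_of_notMem hy, hf0 y hy]
      simp
  calc ∫⁻ y in {y | ⟪p, y⟫ ≤ ⟪p, x⟫} \ {y | ⟪q, y⟫ ≤ ⟪q, x⟫}, ENNReal.ofReal (f y)
      ≤ ∫⁻ y in {y | ⟪p, y⟫ ≤ ⟪p, x⟫} \ {y | ⟪q, y⟫ ≤ ⟪q, x⟫},
        (Metric.closedBall x r).indicator (fun _ => ENNReal.ofReal M) y :=
        lintegral_mono hb
    _ = ENNReal.ofReal M * volume (Metric.closedBall x r ∩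
          ({y | ⟪p, y⟫ ≤ ⟪p, x⟫} \ {y | ⟪q, y⟫ ≤ ⟪q, x⟫})) := by
        rw [lintegral_indicator_const hK, Measure.restrict_apply hK]
    _ = ENNReal.ofReal M * volume (Metric.closedBall (0 : EuclideanSpace ℝ (Fin d)) r ∩
          {z | ⟪p, z⟫ ≤ 0 ∧ 0 < ⟪q, z⟫}) := by
        congr 1
        rw [← measure_preimage_add_right volume x (Metric.closedBall x r ∩ _)]
        congr 1
        ext z
        simp only [Set.mem_preimage, Set.mem_inter_iff, Metric.mem_closedBall,
          Set.mem_diff, Set.mem_setOf_eq, dist_zero_right, not_le]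
        rw [dist_eq_norm, add_sub_cancel_right, inner_add_right, inner_add_right]
        constructor
        · rintro ⟨h1, h2, h3⟩
          exact ⟨h1, by linarith, by linarith⟩
        · rintro ⟨h1, h2, h3⟩
          exact ⟨h1, by linarith, by linarith⟩

theorem stmt_17 {d : ℕ} (M r : ℝ) (hM : 0 < M)
    (C : Set (EuclideanSpace ℝ (Fin d))) (hCb : Bornology.IsBounded C)
    (hr : Metric.diam C = r)
    (f : EuclideanSpace ℝ (Fin d) → ℝ) (hf_nn : ∀ y, 0 ≤ f y)
    (hf_le : ∀ y, f y ≤ M) (hf_supp : ∀ y ∉ C, f y = 0)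
    (μ : Measure (EuclideanSpace ℝ (Fin d)))
    (hμ : μ = volume.withDensity fun y => ENNReal.ofReal (f y))
    [IsProbabilityMeasure μ] :
    ∀ x ∈ C, ∀ u v : EuclideanSpace ℝ (Fin d), ‖u‖ = 1 → ‖v‖ = 1 →
      |(μ {y | ⟪u, y⟫ ≤ ⟪u, x⟫}).toReal - (μ {y | ⟪v, y⟫ ≤ ⟪v, x⟫}).toReal| ≤
        (M * Real.pi ^ ((d : ℝ) / 2 - 1) * r ^ d / Real.Gamma ((d : ℝ) / 2 + 1)) *
          Real.arccos ⟪u, v⟫ := by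
  intro x hx u v hu hv
  -- d = 0 is impossible
  rcases Nat.eq_zero_or_pos d with hd0 | hdpos
  · subst hd0
    have : u = 0 := Subsingleton.elim u 0
    rw [this, norm_zero] at hu
    norm_num at hu
  have : Nonempty (Fin d) := ⟨⟨0, hdpos⟩⟩
  -- basic facts
  have hr0 : 0 ≤ r := hr ▸ Metric.diam_nonneg
  have hγ : 0 < Real.Gamma ((d : ℝ) / 2 + 1) := Real.Gamma_pos_of_pos (by positivity)
  have hf0 : ∀ y ∉ Metric.closedBall x r, f y = 0 := by
    intro y hy
    apply hf_supp
    intro hyC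
    apply hy
    rw [Metric.mem_closedBall]
    exact hr ▸ Metric.dist_le_diam_of_mem hCb hyC hx
  set L : ℝ := M * Real.pi ^ ((d : ℝ) / 2 - 1) * r ^ d / Real.Gamma ((d : ℝ) / 2 + 1) with hL
  set V : ℝ := r ^ d * (Real.pi ^ ((d : ℝ) / 2) / Real.Gamma ((d : ℝ) / 2 + 1)) with hVdef
  have hV0 : 0 ≤ V := by
    rw [hVdef]
    positivity
  have hsqrtpow : Real.sqrt π ^ d = Real.pi ^ ((d : ℝ) / 2) := by
    rw [Real.sqrt_eq_rpow, ← Real.rpow_natCast (π ^ ((1:ℝ)/2)) d, ← Real.rpow_mul pi_pos.le]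
    congr 1
    ring
  have hvolK : ∀ c : EuclideanSpace ℝ (Fin d), (volume (Metric.closedBall c r)).toReal = V := by
    intro c
    rw [EuclideanSpace.volume_closedBall, ENNReal.toReal_mul, ENNReal.toReal_pow,
      ENNReal.toReal_ofReal hr0, ENNReal.toReal_ofReal (by positivity), Fintype.card_fin,
      hsqrtpow, hVdef]
  have hvolK_ne : ∀ c : EuclideanSpace ℝ (Fin d), volume (Metric.closedBall c r) ≠ ⊤ :=
    fun c => (Metric.isBounded_closedBall).measure_lt_top.ne
  have hLV : L = M * V / π := by
    rw [hL, hVdef, Real.rpow_sub pi_pos, Real.rpow_one]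
    field_simp
  have hL0 : 0 ≤ L := by
    rw [hLV]
    positivity
  -- measurability of the two halfspace sets
  have hmeasA : ∀ p : EuclideanSpace ℝ (Fin d), MeasurableSet {y : EuclideanSpace ℝ (Fin d) | ⟪p, y⟫ ≤ ⟪p, x⟫} := by
    intro p
    exact measurableSet_le (Continuous.inner continuous_const continuous_id).measurable
      measurable_const
  -- bounds -1 ≤ ⟪u,v⟫ ≤ 1
  have hcs : |(⟪u, v⟫ : ℝ)| ≤ 1 := by
    have := abs_real_inner_le_norm u v
    rwa [hu, hv, mul_one] at this
  rw [abs_le] at hcs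
  -- probability facts
  have hprob : μ Set.univ = 1 := measure_univ
  have hmuA1 : ∀ s : Set (EuclideanSpace ℝ (Fin d)), (μ s).toReal ≤ 1 := by
    intro s
    have := prob_le_one (μ := μ) (s := s)
    exact ENNReal.toReal_le_of_le_ofReal one_pos.le (by simpa using this)
  have hmuA0 : ∀ s : Set (EuclideanSpace ℝ (Fin d)), 0 ≤ (μ s).toReal := fun s => ENNReal.toReal_nonneg
  -- arccos range
  have harc0 : 0 ≤ Real.arccos ⟪u, v⟫ := Real.arccos_nonneg _
  have harcπ : Real.arccos ⟪u, v⟫ ≤ π := Real.arccos_le_pi _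
  rcases eq_or_lt_of_le hcs.2 with heq1 | hlt1
  · -- ⟪u,v⟫ = 1 : u = v
    have huv : u = v := (inner_eq_one_iff_of_norm_eq_one hu hv).mp heq1
    rw [huv, sub_self, abs_zero]
    exact mul_nonneg hL0 (Real.arccos_nonneg _)
  rcases eq_or_lt_of_le hcs.1 with heqm1 | hgtm1
  · -- ⟪u,v⟫ = -1 : θ = π, use total mass bound
    have hθπ : Real.arccos ⟪u, v⟫ = π := by
      rw [← heqm1, Real.arccos_neg_one]
    rw [hθπ]
    -- 1 ≤ M * V
    have hmass : (1 : ℝ) ≤ M * V := by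
      have h1 : μ Set.univ ≤ ENNReal.ofReal M * volume (Metric.closedBall x r) := by
        rw [hμ, withDensity_apply _ MeasurableSet.univ, Measure.restrict_univ]
        calc ∫⁻ y, ENNReal.ofReal (f y)
            ≤ ∫⁻ y, (Metric.closedBall x r).indicator (fun _ => ENNReal.ofReal M) y := by
              apply lintegral_mono
              intro y
              by_cases hy : y ∈ Metric.closedBall x r
              · rw [Set.indicator_of_mem hy]
                exact ENNReal.ofReal_le_ofReal (hf_le y)
              · rw [Set.indicator_of_notMem hy]
                simp [hf0 y hy]
          _ = ENNReal.ofReal M * volume (Metric.closedBall x r) := by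
              rw [lintegral_indicator_const measurableSet_closedBall]
      rw [hprob] at h1
      have h2 := ENNReal.toReal_mono (by
        exact ENNReal.mul_ne_top ENNReal.ofReal_ne_top (hvolK_ne x)) h1
      rw [ENNReal.toReal_one, ENNReal.toReal_mul, ENNReal.toReal_ofReal hM.le, hvolK x] at h2
      exact h2
    have hbound : |(μ {y | ⟪u, y⟫ ≤ ⟪u, x⟫}).toReal - (μ {y | ⟪v, y⟫ ≤ ⟪v, x⟫}).toReal| ≤ 1 := by
      rw [abs_sub_le_iff]
      constructor <;> linarith [hmuA1 {y | ⟪u, y⟫ ≤ ⟪u, x⟫}, hmuA1 {y | ⟪v, y⟫ ≤ ⟪v, x⟫},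
        hmuA0 {y | ⟪u, y⟫ ≤ ⟪u, x⟫}, hmuA0 {y | ⟪v, y⟫ ≤ ⟪v, x⟫}]
    have : L * π = M * V := by
      rw [hLV]
      field_simp
    linarith
  -- generic case : -1 < ⟪u,v⟫ < 1
  have hvu_comm : (⟪v, u⟫ : ℝ) = ⟪u, v⟫ := real_inner_comm u v
  set θ := Real.arccos ⟪u, v⟫ with hθdef
  -- one-sided bound
  have hside : ∀ p q : EuclideanSpace ℝ (Fin d), ‖p‖ = 1 → ‖q‖ = 1 → (⟪p, q⟫ : ℝ) < 1 →
      -1 < (⟪p, q⟫ : ℝ) →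
      (μ ({y | ⟪p, y⟫ ≤ ⟪p, x⟫} \ {y | ⟪q, y⟫ ≤ ⟪q, x⟫})).toReal ≤
        L * Real.arccos ⟪p, q⟫ := by
    intro p q hp hq hpq1 hpqm1
    have h1 : μ ({y | ⟪p, y⟫ ≤ ⟪p, x⟫} \ {y | ⟪q, y⟫ ≤ ⟪q, x⟫}) ≤
        ENNReal.ofReal M * volume (Metric.closedBall (0 : EuclideanSpace ℝ (Fin d)) r ∩
          {z | ⟪p, z⟫ ≤ 0 ∧ 0 < ⟪q, z⟫}) := hμ ▸ mu_diff_bound hM.le f hf_le x hf0 p q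
    have h2 := wedge_vol r hp hq hpq1 hpqm1
    -- convert to reals
    have hWne : volume (Metric.closedBall (0 : EuclideanSpace ℝ (Fin d)) r ∩
        {z | ⟪p, z⟫ ≤ 0 ∧ 0 < ⟪q, z⟫}) ≠ ⊤ :=
      ne_top_of_le_ne_top (hvolK_ne 0) (measure_mono Set.inter_subset_left)
    have h2' : 2 * π * (volume (Metric.closedBall (0 : EuclideanSpace ℝ (Fin d)) r ∩
        {z | ⟪p, z⟫ ≤ 0 ∧ 0 < ⟪q, z⟫})).toReal ≤ Real.arccos ⟪p, q⟫ * V := by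
      have := ENNReal.toReal_mono (by
        exact ENNReal.mul_ne_top ENNReal.ofReal_ne_top (hvolK_ne 0)) h2
      rw [ENNReal.toReal_mul, ENNReal.toReal_mul, ENNReal.toReal_ofReal (by positivity),
        ENNReal.toReal_ofReal (Real.arccos_nonneg _), hvolK 0] at this
      exact this
    have h1' : (μ ({y | ⟪p, y⟫ ≤ ⟪p, x⟫} \ {y | ⟪q, y⟫ ≤ ⟪q, x⟫})).toReal ≤
        M * (volume (Metric.closedBall (0 : EuclideanSpace ℝ (Fin d)) r ∩
          {z | ⟪p, z⟫ ≤ 0 ∧ 0 < ⟪q, z⟫})).toReal := by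
      have := ENNReal.toReal_mono (ENNReal.mul_ne_top ENNReal.ofReal_ne_top hWne) h1
      rwa [ENNReal.toReal_mul, ENNReal.toReal_ofReal hM.le] at this
    have harc0' : 0 ≤ Real.arccos ⟪p, q⟫ := Real.arccos_nonneg _
    have hW0 : 0 ≤ (volume (Metric.closedBall (0 : EuclideanSpace ℝ (Fin d)) r ∩
        {z | ⟪p, z⟫ ≤ 0 ∧ 0 < ⟪q, z⟫})).toReal := ENNReal.toReal_nonneg
    rw [hLV]
    rw [div_mul_eq_mul_div, le_div_iff₀ pi_pos]
    nlinarith [pi_pos, mul_le_mul_of_nonneg_left h2' hM.le,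
      mul_le_mul_of_nonneg_right h1' pi_pos.le,
      mul_nonneg (mul_nonneg hM.le harc0') hV0]
  -- combine the two sides
  have key1 := hside u v hu hv hlt1 hgtm1
  have key2 := hside v u hv hu (hvu_comm ▸ hlt1) (hvu_comm ▸ hgtm1)
  rw [hvu_comm] at key2
  set A := {y : EuclideanSpace ℝ (Fin d) | ⟪u, y⟫ ≤ ⟪u, x⟫} with hA
  set B := {y : EuclideanSpace ℝ (Fin d) | ⟪v, y⟫ ≤ ⟪v, x⟫} with hB
  have hfinA : μ A ≠ ⊤ := measure_ne_top μ A
  have hfinB : μ B ≠ ⊤ := measure_ne_top μ B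
  have hsub1 : (μ A).toReal - (μ B).toReal ≤ (μ (A \ B)).toReal := by
    have : μ A ≤ μ B + μ (A \ B) := by
      calc μ A ≤ μ (B ∪ A \ B) := measure_mono (fun y hy => by
        by_cases h : y ∈ B
        · exact Or.inl h
        · exact Or.inr ⟨hy, h⟩)
        _ ≤ μ B + μ (A \ B) := measure_union_le _ _
    have h := ENNReal.toReal_mono (by
      exact ENNReal.add_ne_top.mpr ⟨measure_ne_top μ B, measure_ne_top μ _⟩) this
    rw [ENNReal.toReal_add (measure_ne_top μ B) (measure_ne_top μ _)] at h
    linarith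
  have hsub2 : (μ B).toReal - (μ A).toReal ≤ (μ (B \ A)).toReal := by
    have : μ B ≤ μ A + μ (B \ A) := by
      calc μ B ≤ μ (A ∪ B \ A) := measure_mono (fun y hy => by
        by_cases h : y ∈ A
        · exact Or.inl h
        · exact Or.inr ⟨hy, h⟩)
        _ ≤ μ A + μ (B \ A) := measure_union_le _ _
    have h := ENNReal.toReal_mono (by
      exact ENNReal.add_ne_top.mpr ⟨measure_ne_top μ A, measure_ne_top μ _⟩) this
    rw [ENNReal.toReal_add (measure_ne_top μ A) (measure_ne_top μ _)] at h
    linarith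
  rw [abs_sub_le_iff]
  constructor
  · linarith
  · linarith
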